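/- The monoid of injective endomorphisms of the semigroup B_λ of λ×λ-matrix units (under composition) is isomorphic to the monoid of injective self-maps of λ under composition. -/

import Mathlib

/-- The semigroup of `λ×λ`-matrix units: the set `(λ×λ) ∪ {0}`, with `0 = none`. -/
abbrev MU (α : Type*) := Option (α × α)

/-- Multiplication of matrix units: `(a,b)·(c,d) = (a,d)` if `b = c`, and `0` otherwise;
`0` is absorbing on both sides. -/
def mumul {α : Type*} [DecidableEq α] : MU α → MU α → MU α
  | some x, some y => if x.2 = y.1 then some (x.1, y.2) else none
  | _, _ => none

/-- The monoid of injective endomorphisms of `B_λ` under composition. -/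
def InjEndMU (α : Type*) [DecidableEq α] :=
  {f : MU α → MU α //
    Function.Injective f ∧ ∀ x y : MU α, f (mumul x y) = mumul (f x) (f y)}

instance (α : Type*) [DecidableEq α] : Monoid (InjEndMU α) where
  mul f g := ⟨f.1 ∘ g.1, f.2.1.comp g.2.1, fun x y => by
    simp only [Function.comp_apply, g.2.2, f.2.2]⟩
  one := ⟨id, fun a b h => h, fun x y => rfl⟩
  mul_assoc f g h := rfl
  one_mul f := rfl
  mul_one f := rfl

/-- The monoid of injective self-maps of `λ` under composition. -/
def InjMap (α : Type*) := {f : α → α // Function.Injective f}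

instance (α : Type*) : Monoid (InjMap α) where
  mul f g := ⟨f.1 ∘ g.1, f.2.comp g.2⟩
  one := ⟨id, fun a b h => h⟩
  mul_assoc f g h := rfl
  one_mul f := rfl
  mul_one f := rfl

section Aux

variable {α : Type*} [DecidableEq α]

lemma mumul_none_left (x : MU α) : mumul none x = none := by cases x <;> rfl

lemma mumul_none_right (x : MU α) : mumul x none = none := by cases x <;> rfl

lemma injend_none (f : MU α → MU α) (hinj : Function.Injective f)
    (hm : ∀ x y, f (mumul x y) = mumul (f x) (f y)) : f none = none := by
  rcases h : f none with _ | ⟨c, d⟩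
  · rfl
  · exfalso
    have h1 : f none = mumul (f none) (f none) := by
      conv_lhs => rw [show (none : MU α) = mumul none none from rfl, hm]
    rw [h] at h1
    have hdc : d = c := by
      by_contra hdc
      simp [mumul, hdc] at h1
    subst hdc
    have h2 : f none = mumul (f (some (d, d))) (f none) := by
      conv_lhs => rw [show (none : MU α) = mumul (some (d, d)) none from rfl, hm]
    rw [h] at h2
    rcases h3 : f (some (d, d)) with _ | ⟨p, q⟩
    · rw [h3] at h2; simp [mumul] at h2
    · rw [h3] at h2
      by_cases hq : q = d
      · rw [hq] at h2
        rw [show mumul (some (p, d)) (some (d, d)) = some (p, d) by simp [mumul]] at h2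
        have hp : d = p := (Prod.ext_iff.mp (Option.some_injective _ h2)).1
        have hfe : f (some (d, d)) = f none := by rw [h3, h, hq, hp]
        have := hinj hfe
        simp at this
      · simp [mumul, hq] at h2

lemma injend_struct (f : MU α → MU α) (hinj : Function.Injective f)
    (hm : ∀ x y, f (mumul x y) = mumul (f x) (f y)) :
    ∃ i : α → α, Function.Injective i ∧ ∀ x, f x = Option.map (Prod.map i i) x := by
  have h0 := injend_none f hinj hm
  have hdiag : ∀ a : α, ∃ b : α, f (some (a, a)) = some (b, b) := by
    intro a
    have h1 := hm (some (a, a)) (some (a, a))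
    rw [show mumul (some (a, a)) (some (a, a)) = some (a, a) by simp [mumul]] at h1
    rcases h2 : f (some (a, a)) with _ | ⟨p, q⟩
    · exfalso
      have : (some (a, a) : MU α) = none := hinj (h2.trans h0.symm)
      simp at this
    · rw [h2] at h1
      have hqp : q = p := by
        by_contra hqp
        simp [mumul, hqp] at h1
      exact ⟨p, by rw [hqp]⟩
  choose i hi using hdiag
  have hall : ∀ a b : α, f (some (a, b)) = some (i a, i b) := by
    intro a b
    rcases h2 : f (some (a, b)) with _ | ⟨p, q⟩
    · exfalso
      have : (some (a, b) : MU α) = none := hinj (h2.trans h0.symm)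
      simp at this
    · have hleft := hm (some (a, a)) (some (a, b))
      rw [show mumul (some (a, a)) (some (a, b)) = some (a, b) by simp [mumul],
        hi, h2] at hleft
      have hp : p = i a := by
        by_cases hc : i a = p
        · exact hc.symm
        · exfalso; simp [mumul, hc] at hleft
      have hright := hm (some (a, b)) (some (b, b))
      rw [show mumul (some (a, b)) (some (b, b)) = some (a, b) by simp [mumul],
        hi, h2] at hright
      have hq : q = i b := by
        by_cases hc : q = i b
        · exact hc
        · exfalso; simp [mumul, hc] at hright
      rw [hp, hq]
  refine ⟨i, ?_, ?_⟩
  · intro a b hab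
    have h5 : f (some (a, a)) = f (some (b, b)) := by rw [hi, hi, hab]
    have h6 := hinj h5
    exact (Prod.ext_iff.mp (Option.some_injective _ h6)).1
  · intro x
    rcases x with _ | ⟨a, b⟩
    · simpa using h0
    · simp [hall a b, Prod.map]

/-- The injective endomorphism of `MU α` induced by an injective map. -/
def toEnd (j : InjMap α) : InjEndMU α :=
  ⟨Option.map (Prod.map j.1 j.1), by
    intro x y hxy
    rcases x with _ | ⟨a, b⟩ <;> rcases y with _ | ⟨c, d⟩ <;>
      simp only [Option.map_none, Option.map_some, Prod.map, Option.some.injEq,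
        Prod.mk.injEq, reduceCtorEq] at hxy ⊢
    exact ⟨j.2 hxy.1, j.2 hxy.2⟩, by
    intro x y
    rcases x with _ | ⟨a, b⟩ <;> rcases y with _ | ⟨c, d⟩ <;>
      simp [mumul, Prod.map]
    by_cases h : b = c
    · simp [h]
    · have : j.1 b ≠ j.1 c := fun e => h (j.2 e)
      simp [h, this]⟩

end Aux


/-- The monoid of injective endomorphisms of the semigroup `B_λ` of `λ×λ`-matrix units is
isomorphic to the monoid of injective self-maps of `λ` under composition. -/
theorem matrixUnits_injEnd_iso_injMaps (α : Type*) [DecidableEq α] :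
    Nonempty (InjEndMU α ≃* InjMap α) := by
  have struct := fun f : InjEndMU α => injend_struct f.1 f.2.1 f.2.2
  choose i hinj hspec using struct
  refine ⟨{ toFun := fun f => ⟨i f, hinj f⟩,
            invFun := toEnd,
            left_inv := ?_, right_inv := ?_, map_mul' := ?_ }⟩
  · intro f
    apply Subtype.ext
    funext x
    exact (hspec f x).symm
  · intro j
    apply Subtype.ext
    funext a
    have h := hspec (toEnd j) (some (a, a))
    simp only [toEnd, Option.map_some, Prod.map, Option.some.injEq, Prod.mk.injEq] at h
    exact h.1.symm
  · intro f g
    apply Subtype.ext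
    funext a
    have h1 : f.1 (g.1 (some (a, a))) = some (i (f * g) a, i (f * g) a) :=
      hspec (f * g) (some (a, a))
    have h2 := hspec g (some (a, a))
    have h3 := hspec f (some (i g a, i g a))
    simp only [Option.map_some, Prod.map] at h2 h3
    rw [h2, h3] at h1
    simp only [Option.some.injEq, Prod.mk.injEq] at h1
    exact h1.1.symm
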